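/- arXiv:1109.1857 — 4 statements merged into one kernel-verified Lean document; each statement's English description precedes it below -/
import Mathlib

section
/- Let H be a complex Hilbert space, let (g_n)_{n≥1} be a sequence of vectors in H, and let B ≥ 1. Suppose that for every finitely supported sequence (α_n) of complex numbers one has B^{-1}·Σ_n |α_n|² ≤ ‖Σ_n α_n g_n‖² ≤ B·Σ_n |α_n|². Then for every sequence (w_n) of complex numbers with |w_n| ≤ 1 for all n, the infinite matrix whose (i,j) entry is (B² − w_i·conj(w_j))·⟨g_j, g_i⟩ is positive semidefinite. -/
open scoped ComplexOrder

lemma gram_sum_eq {H : Type*} [NormedAddCommGroup H] [InnerProductSpace ℂ H]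
    (g : ℕ → H) (s : Finset ℕ) (γ : ℕ → ℂ) :
    ∑ i ∈ s, ∑ j ∈ s, (starRingEnd ℂ) (γ i) * γ j * (inner ℂ (g i) (g j) : ℂ)
      = ((‖∑ i ∈ s, γ i • g i‖ ^ 2 : ℝ) : ℂ) := by
  have h : ((‖∑ i ∈ s, γ i • g i‖ ^ 2 : ℝ) : ℂ)
      = inner ℂ (∑ i ∈ s, γ i • g i) (∑ i ∈ s, γ i • g i) := by
    rw [inner_self_eq_norm_sq_to_K]; norm_cast
  rw [h, sum_inner]
  refine Finset.sum_congr rfl fun i _ => ?_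
  rw [inner_sum]
  refine Finset.sum_congr rfl fun j _ => ?_
  rw [inner_smul_left, inner_smul_right]
  ring

theorem stmt_1 {H : Type*} [NormedAddCommGroup H] [InnerProductSpace ℂ H] [CompleteSpace H]
    (g : ℕ → H) (B : ℝ) (hB : 1 ≤ B)
    (hframe : ∀ (s : Finset ℕ) (α : ℕ → ℂ),
      B⁻¹ * (∑ i ∈ s, ‖α i‖ ^ 2) ≤ ‖∑ i ∈ s, α i • g i‖ ^ 2 ∧
      ‖∑ i ∈ s, α i • g i‖ ^ 2 ≤ B * ∑ i ∈ s, ‖α i‖ ^ 2) :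
    ∀ w : ℕ → ℂ, (∀ n, ‖w n‖ ≤ 1) →
      ∀ (s : Finset ℕ) (α : ℕ → ℂ),
        0 ≤ ∑ i ∈ s, ∑ j ∈ s, (starRingEnd ℂ) (α i) * α j *
          ((((B : ℂ) ^ 2) - w i * (starRingEnd ℂ) (w j)) * (inner ℂ (g i) (g j) : ℂ)) := by
  intro w hw s α
  set β : ℕ → ℂ := fun n => (starRingEnd ℂ) (w n) * α n with hβ
  have key : ∑ i ∈ s, ∑ j ∈ s, (starRingEnd ℂ) (α i) * α j *
      ((((B : ℂ) ^ 2) - w i * (starRingEnd ℂ) (w j)) * (inner ℂ (g i) (g j) : ℂ))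
      = (B : ℂ) ^ 2 * (∑ i ∈ s, ∑ j ∈ s, (starRingEnd ℂ) (α i) * α j * (inner ℂ (g i) (g j) : ℂ))
        - ∑ i ∈ s, ∑ j ∈ s, (starRingEnd ℂ) (β i) * β j * (inner ℂ (g i) (g j) : ℂ) := by
    rw [Finset.mul_sum, ← Finset.sum_sub_distrib]
    refine Finset.sum_congr rfl fun i _ => ?_
    rw [Finset.mul_sum, ← Finset.sum_sub_distrib]
    refine Finset.sum_congr rfl fun j _ => ?_
    simp only [hβ, map_mul, RingHom.id_apply, starRingEnd_self_apply]
    ring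
  rw [key, gram_sum_eq, gram_sum_eq]
  have h1 := (hframe s α).1
  have h2 := (hframe s β).2
  have hB0 : 0 < B := lt_of_lt_of_le one_pos hB
  have hβα : ∑ i ∈ s, ‖β i‖ ^ 2 ≤ ∑ i ∈ s, ‖α i‖ ^ 2 := by
    refine Finset.sum_le_sum fun i _ => ?_
    have : ‖β i‖ ≤ ‖α i‖ := by
      rw [hβ, norm_mul, RCLike.norm_conj]
      calc ‖w i‖ * ‖α i‖ ≤ 1 * ‖α i‖ :=
            mul_le_mul_of_nonneg_right (hw i) (norm_nonneg _)
        _ = ‖α i‖ := one_mul _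
    exact pow_le_pow_left₀ (norm_nonneg _) this 2
  have hreal : (‖∑ i ∈ s, β i • g i‖ : ℝ) ^ 2 ≤ B ^ 2 * ‖∑ i ∈ s, α i • g i‖ ^ 2 := by
    calc ‖∑ i ∈ s, β i • g i‖ ^ 2 ≤ B * ∑ i ∈ s, ‖β i‖ ^ 2 := h2
      _ ≤ B * ∑ i ∈ s, ‖α i‖ ^ 2 := by
          exact mul_le_mul_of_nonneg_left hβα hB0.le
      _ = B ^ 2 * (B⁻¹ * ∑ i ∈ s, ‖α i‖ ^ 2) := by field_simp
      _ ≤ B ^ 2 * ‖∑ i ∈ s, α i • g i‖ ^ 2 := by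
          exact mul_le_mul_of_nonneg_left h1 (by positivity)
  have : (B : ℂ) ^ 2 * ((‖∑ i ∈ s, α i • g i‖ ^ 2 : ℝ) : ℂ)
      - ((‖∑ i ∈ s, β i • g i‖ ^ 2 : ℝ) : ℂ)
      = ((B ^ 2 * ‖∑ i ∈ s, α i • g i‖ ^ 2 - ‖∑ i ∈ s, β i • g i‖ ^ 2 : ℝ) : ℂ) := by
    push_cast
    ring
  rw [this]
  rw [Complex.zero_le_real]
  linarith
end

section
/- Let (z_n)_{n≥1} be a sequence of points in the open unit disc 𝔻 ⊂ ℂ, let C > 0, and let (f_n)_{n≥1} be a sequence of holomorphic functions f_n : 𝔻 → ℂ such that Σ_n |f_n(z)|² ≤ C² for every z ∈ 𝔻 and f_n(z_m) = δ_{nm} for all n, m (Kronecker delta). Then for every bounded sequence (w_n) of complex numbers there exists a holomorphic function f : 𝔻 → ℂ with |f(z)| ≤ C²·sup_n |w_n| for all z ∈ 𝔻 and f(z_n) = w_n for all n. (One may take f(z) = Σ_n w_n·f_n(z)², which converges absolutely at every z ∈ 𝔻.) -/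
open Metric Real Complex intervalIntegral

/-- Cauchy-type estimate: for `F` holomorphic on the closed ball of radius `r'`,
and `‖z‖ ≤ r < r'`, we have `2π‖F z‖ ≤ (r'/(r'-r)) ∫₀^{2π} ‖F(r' e^{iθ})‖ dθ`. -/
lemma key_cauchy_est {F : ℂ → ℂ} {r r' : ℝ} (hr0 : 0 ≤ r) (hrr' : r < r')
    (hF : DifferentiableOn ℂ F (Metric.closedBall 0 r')) {z : ℂ} (hz : ‖z‖ ≤ r) :
    2 * π * ‖F z‖ ≤ (r' / (r' - r)) * ∫ θ in (0:ℝ)..(2*π), ‖F (circleMap 0 r' θ)‖ := by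
  have hr' : 0 < r' := lt_of_le_of_lt hr0 hrr'
  have hzball : z ∈ Metric.ball (0 : ℂ) r' := by
    simpa [Metric.mem_ball, Complex.dist_eq] using lt_of_le_of_lt hz hrr'
  have hcauchy := hF.circleIntegral_sub_inv_smul hzball
  -- norm of the two sides
  have hnormL : ‖(2 * ↑π * Complex.I) • F z‖ = 2 * π * ‖F z‖ := by
    have h1 : ‖(2 * ↑π * Complex.I : ℂ)‖ = 2 * π := by
      simp [norm_mul,
        _root_.abs_of_nonneg Real.pi_pos.le]
    rw [norm_smul, h1]
  -- lower bound for distances to the circle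
  have hdist : ∀ θ : ℝ, r' - r ≤ ‖circleMap 0 r' θ - z‖ := by
    intro θ
    have h1 : ‖circleMap 0 r' θ‖ = r' := by
      simpa [abs_of_pos hr'] using norm_circleMap_zero r' θ
    calc r' - r ≤ ‖circleMap 0 r' θ‖ - ‖z‖ := by rw [h1]; linarith
      _ ≤ ‖circleMap 0 r' θ - z‖ := norm_sub_norm_le _ _
  have hFcont : Continuous fun θ : ℝ => F (circleMap 0 r' θ) := by
    apply hF.continuousOn.comp_continuous (continuous_circleMap 0 r')
    intro θ
    simp [Metric.mem_closedBall, Complex.dist_eq,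
      (by simpa [abs_of_pos hr'] using norm_circleMap_zero r' θ : ‖circleMap 0 r' θ‖ = r')]
  have hrr'pos : 0 < r' - r := by linarith
  -- estimate the circle integral
  have hne : ∀ θ : ℝ, circleMap 0 r' θ - z ≠ 0 := by
    intro θ h
    have := hdist θ
    rw [h, norm_zero] at this
    linarith
  have hIcont : Continuous fun θ : ℝ =>
      deriv (circleMap 0 r') θ • (circleMap 0 r' θ - z)⁻¹ • F (circleMap 0 r' θ) := by
    simp only [deriv_circleMap]
    exact ((continuous_circleMap 0 r').mul continuous_const).smul
      ((((continuous_circleMap 0 r').sub continuous_const).inv₀ hne).smul hFcont)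
  have hbound : ‖∮ w in C(0, r'), (w - z)⁻¹ • F w‖ ≤
      ∫ θ in (0:ℝ)..(2*π), r' / (r' - r) * ‖F (circleMap 0 r' θ)‖ := by
    rw [circleIntegral]
    have h2pi : (0:ℝ) ≤ 2 * π := by positivity
    refine le_trans (intervalIntegral.norm_integral_le_integral_norm h2pi) ?_
    apply intervalIntegral.integral_mono_on h2pi
      (hIcont.norm.intervalIntegrable _ _)
      ((continuous_const.mul hFcont.norm).intervalIntegrable _ _)
    · intro θ _
      rw [deriv_circleMap]
      have h1 : ‖circleMap 0 r' θ * Complex.I‖ = r' := by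
        simp [norm_mul, norm_circleMap_zero, abs_of_pos hr']
      have h2 : ‖(circleMap 0 r' θ - z)⁻¹‖ ≤ (r' - r)⁻¹ := by
        rw [norm_inv]
        exact inv_anti₀ hrr'pos (hdist θ)
      calc ‖(circleMap 0 r' θ * Complex.I) • (circleMap 0 r' θ - z)⁻¹ • F (circleMap 0 r' θ)‖
          = ‖circleMap 0 r' θ * Complex.I‖ * (‖(circleMap 0 r' θ - z)⁻¹‖ * ‖F (circleMap 0 r' θ)‖) := by
            simp [norm_smul, norm_mul, mul_assoc]
        _ ≤ r' * ((r' - r)⁻¹ * ‖F (circleMap 0 r' θ)‖) := by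
            rw [h1]
            exact mul_le_mul_of_nonneg_left
              (mul_le_mul_of_nonneg_right h2 (norm_nonneg _)) hr'.le
        _ = r' / (r' - r) * ‖F (circleMap 0 r' θ)‖ := by ring
  rw [hcauchy, hnormL] at hbound
  calc 2 * π * ‖F z‖ ≤ ∫ θ in (0:ℝ)..(2*π), r' / (r' - r) * ‖F (circleMap 0 r' θ)‖ := hbound
    _ = (r' / (r' - r)) * ∫ θ in (0:ℝ)..(2*π), ‖F (circleMap 0 r' θ)‖ :=
        intervalIntegral.integral_const_mul _ _

theorem stmt_5 (z : ℕ → ℂ) (hz : ∀ n, ‖z n‖ < 1) (C : ℝ) (hC : 0 < C)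
    (f : ℕ → ℂ → ℂ)
    (hdiff : ∀ n, DifferentiableOn ℂ (f n) (Metric.ball 0 1))
    (hbd : ∀ x ∈ Metric.ball (0 : ℂ) 1, ∀ s : Finset ℕ, ∑ n ∈ s, ‖f n x‖ ^ 2 ≤ C ^ 2)
    (hdelta : ∀ n m, f n (z m) = if n = m then 1 else 0) :
    ∀ w : ℕ → ℂ, BddAbove (Set.range fun n => ‖w n‖) →
      ∃ g : ℂ → ℂ, DifferentiableOn ℂ g (Metric.ball 0 1) ∧
        (∀ x ∈ Metric.ball (0 : ℂ) 1, ‖g x‖ ≤ C ^ 2 * ⨆ n, ‖w n‖) ∧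
        ∀ n, g (z n) = w n := by
  intro w hw
  set M : ℝ := ⨆ n, ‖w n‖ with hM
  have hwM : ∀ n, ‖w n‖ ≤ M := fun n => le_ciSup hw n
  have hM0 : 0 ≤ M := le_trans (norm_nonneg (w 0)) (hwM 0)
  -- the candidate function
  set g : ℂ → ℂ := fun x => ∑' n, w n * (f n x) ^ 2 with hg
  -- pointwise summability of the squares
  have hsq : ∀ x ∈ Metric.ball (0 : ℂ) 1, Summable fun n => ‖f n x‖ ^ 2 := by
    intro x hx
    apply summable_of_sum_le (fun n => sq_nonneg _) (fun s => hbd x hx s)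
  have hsummable : ∀ x ∈ Metric.ball (0 : ℂ) 1, Summable fun n => ‖w n * (f n x) ^ 2‖ := by
    intro x hx
    apply Summable.of_nonneg_of_le (fun n => norm_nonneg _) (fun n => ?_)
      ((hsq x hx).mul_left M)
    calc ‖w n * (f n x) ^ 2‖ = ‖w n‖ * ‖f n x‖ ^ 2 := by simp [norm_mul, norm_pow]
      _ ≤ M * ‖f n x‖ ^ 2 := mul_le_mul_of_nonneg_right (hwM n) (sq_nonneg _)
  -- uniform convergence on closed balls of radius r < 1
  have hunif : ∀ r : ℝ, 0 ≤ r → r < 1 →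
      TendstoUniformlyOn (fun (t : Finset ℕ) x => ∑ n ∈ t, w n * (f n x) ^ 2) g
        Filter.atTop (Metric.closedBall 0 r) := by
    intro r hr0 hr1
    set r' : ℝ := (r + 1) / 2 with hr'
    have hrr' : r < r' := by rw [hr']; linarith
    have hr'1 : r' < 1 := by rw [hr']; linarith
    have hr'0 : 0 < r' := by linarith
    have hsub : Metric.closedBall (0:ℂ) r' ⊆ Metric.ball 0 1 :=
      Metric.closedBall_subset_ball hr'1
    have hcm : ∀ θ : ℝ, circleMap 0 r' θ ∈ Metric.ball (0:ℂ) 1 := by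
      intro θ
      simp only [Metric.mem_ball, dist_zero_right]
      rw [norm_circleMap_zero, abs_of_pos hr'0]; exact hr'1
    -- continuity on the circle
    have hFcont : ∀ n, Continuous fun θ : ℝ => f n (circleMap 0 r' θ) := by
      intro n
      exact (hdiff n).continuousOn.comp_continuous (continuous_circleMap 0 r')
        (fun θ => hcm θ)
    set Int : ℕ → ℝ := fun n => ∫ θ in (0:ℝ)..(2*π), ‖f n (circleMap 0 r' θ)‖ ^ 2 with hInt
    have hIntnn : ∀ n, 0 ≤ Int n := by
      intro n
      apply intervalIntegral.integral_nonneg (by positivity)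
      intro θ _; positivity
    -- summability of the integrals
    have hIntsum : Summable Int := by
      apply summable_of_sum_le hIntnn
      intro s
      have h1 : ∑ n ∈ s, Int n = ∫ θ in (0:ℝ)..(2*π), ∑ n ∈ s, ‖f n (circleMap 0 r' θ)‖ ^ 2 :=
        (intervalIntegral.integral_finset_sum
          (fun n _ => (((hFcont n).norm.pow 2)).intervalIntegrable _ _)).symm
      rw [h1]
      calc (∫ θ in (0:ℝ)..(2*π), ∑ n ∈ s, ‖f n (circleMap 0 r' θ)‖ ^ 2)
          ≤ ∫ _θ in (0:ℝ)..(2*π), C ^ 2 := by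
            apply intervalIntegral.integral_mono_on (by positivity)
            · exact (continuous_finset_sum s (fun n _ => (hFcont n).norm.pow 2)).intervalIntegrable _ _
            · exact intervalIntegrable_const
            · intro θ _
              exact hbd _ (hcm θ) s
        _ = 2 * π * C ^ 2 := by rw [intervalIntegral.integral_const, smul_eq_mul]; ring
    -- uniform bound
    have hkey : ∀ n, ∀ x ∈ Metric.closedBall (0:ℂ) r, ‖w n * (f n x) ^ 2‖ ≤
        M * ((2 * π)⁻¹ * (r' / (r' - r) * Int n)) := by
      intro n x hx
      have hxr : ‖x‖ ≤ r := by simpa [Complex.dist_eq] using hx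
      have hFd : DifferentiableOn ℂ (fun y => (f n y) ^ 2) (Metric.closedBall 0 r') :=
        ((hdiff n).mono hsub).pow 2
      have := key_cauchy_est hr0 hrr' hFd hxr
      have heq : (∫ θ in (0:ℝ)..(2*π), ‖(f n (circleMap 0 r' θ)) ^ 2‖) = Int n := by
        rw [hInt]
        congr 1; funext θ; rw [norm_pow]
      rw [heq] at this
      have h2pi : (0:ℝ) < 2 * π := by positivity
      have hfx2 : ‖f n x‖ ^ 2 ≤ (2 * π)⁻¹ * (r' / (r' - r) * Int n) := by
        rw [← norm_pow]
        calc ‖(f n x) ^ 2‖ = (2 * π)⁻¹ * (2 * π * ‖(f n x) ^ 2‖) := by field_simp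
          _ ≤ (2 * π)⁻¹ * (r' / (r' - r) * Int n) :=
              mul_le_mul_of_nonneg_left this (by positivity)
      calc ‖w n * (f n x) ^ 2‖ = ‖w n‖ * ‖f n x‖ ^ 2 := by simp [norm_mul, norm_pow]
        _ ≤ M * ((2 * π)⁻¹ * (r' / (r' - r) * Int n)) :=
            mul_le_mul (hwM n) hfx2 (sq_nonneg _) hM0
    exact tendstoUniformlyOn_tsum
      (((hIntsum.mul_left _).mul_left _).mul_left M) hkey
  -- differentiability
  have hgdiff : DifferentiableOn ℂ g (Metric.ball 0 1) := by
    intro x hx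
    have hxn : ‖x‖ < 1 := by simpa [Complex.dist_eq] using hx
    set r : ℝ := (‖x‖ + 1) / 2 with hrdef
    have hr0 : 0 ≤ r := by positivity
    have hr1 : r < 1 := by rw [hrdef]; linarith
    have hxr : x ∈ Metric.ball (0:ℂ) r := by
      simp only [Metric.mem_ball, dist_zero_right]
      rw [hrdef]; linarith
    have hdOn : DifferentiableOn ℂ g (Metric.ball 0 r) := by
      apply TendstoLocallyUniformlyOn.differentiableOn
        (((hunif r hr0 hr1).tendstoLocallyUniformlyOn).mono Metric.ball_subset_closedBall)
      · filter_upwards with t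
        apply DifferentiableOn.fun_sum
        intro n _
        exact (differentiableOn_const (w n)).mul
          (((hdiff n).mono (Metric.ball_subset_ball hr1.le)).pow 2)
      · exact Metric.isOpen_ball
    exact ((hdOn x hxr).differentiableAt (Metric.isOpen_ball.mem_nhds hxr)).differentiableWithinAt
  refine ⟨g, hgdiff, ?_, ?_⟩
  · -- the bound
    intro x hx
    have h1 : ‖g x‖ ≤ ∑' n, ‖w n * (f n x) ^ 2‖ := norm_tsum_le_tsum_norm (hsummable x hx)
    have h2 : ∑' n, ‖w n * (f n x) ^ 2‖ ≤ ∑' n, M * ‖f n x‖ ^ 2 := by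
      apply Summable.tsum_le_tsum _ (hsummable x hx) ((hsq x hx).mul_left M)
      intro n
      calc ‖w n * (f n x) ^ 2‖ = ‖w n‖ * ‖f n x‖ ^ 2 := by simp [norm_mul, norm_pow]
        _ ≤ M * ‖f n x‖ ^ 2 := mul_le_mul_of_nonneg_right (hwM n) (sq_nonneg _)
    have h3 : ∑' n, M * ‖f n x‖ ^ 2 = M * ∑' n, ‖f n x‖ ^ 2 := tsum_mul_left
    have h4 : ∑' n, ‖f n x‖ ^ 2 ≤ C ^ 2 := by
      apply Summable.tsum_le_of_sum_le (hsq x hx) (fun s => hbd x hx s)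
    calc ‖g x‖ ≤ M * ∑' n, ‖f n x‖ ^ 2 := by rw [← h3]; exact le_trans h1 h2
      _ ≤ M * C ^ 2 := mul_le_mul_of_nonneg_left h4 hM0
      _ = C ^ 2 * M := mul_comm _ _
  · -- interpolation
    intro n
    rw [hg]
    have : ∀ m, w m * (f m (z n)) ^ 2 = if m = n then w n else 0 := by
      intro m
      rw [hdelta m n]
      by_cases h : m = n <;> simp [h]
    calc (∑' m, w m * (f m (z n)) ^ 2) = ∑' m, if m = n then w n else 0 := by
          congr 1; funext m; exact this m
      _ = w n := by rw [tsum_eq_single n (fun m hm => by simp [hm])]; simp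
end

section
/- Let (z_n)_{n≥1} be a sequence of points in the open unit disc 𝔻 ⊂ ℂ, fix an index m, and suppose that for each n ≠ m there is a holomorphic function f_n : 𝔻 → ℂ with |f_n(z)| ≤ 1 for all z ∈ 𝔻, f_n(z_n) = 0, and f_n(z_m) ≠ 0, and suppose Σ_{n≠m} (1 − |f_n(z_m)|²) < ∞. Then there exists a holomorphic function φ : 𝔻 → ℂ with |φ(z)| ≤ 1 for all z ∈ 𝔻, φ(z_n) = 0 for every n ≠ m, and |φ(z_m)| ≥ inf_F Π_{n∈F} |f_n(z_m)| > 0, where the infimum is taken over all finite subsets F of the indices n ≠ m. -/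
open Metric Complex Finset

private lemma normSq_identity (a b : ℂ) :
    Complex.normSq (1 - (starRingEnd ℂ) a * b) - Complex.normSq (b - a)
      = (1 - Complex.normSq a) * (1 - Complex.normSq b) := by
  simp only [Complex.normSq_apply, Complex.sub_re, Complex.sub_im, Complex.mul_re, Complex.mul_im,
    Complex.one_re, Complex.one_im, Complex.conj_re, Complex.conj_im]
  ring

private lemma norm_sq_eq (x : ℂ) : ‖x‖ ^ 2 = Complex.normSq x := by
  rw [Complex.sq_norm]

private lemma norm_lt_iff_aux {a b : ℂ} (h : Complex.normSq a < Complex.normSq b) : ‖a‖ < ‖b‖ := by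
  have := norm_sq_eq a; have := norm_sq_eq b
  nlinarith [norm_nonneg a, norm_nonneg b]

private lemma den_ne_zero {a b : ℂ} (ha : ‖a‖ < 1) (hb : ‖b‖ < 1) :
    1 - (starRingEnd ℂ) a * b ≠ 0 := by
  intro h
  have h1 : ‖(starRingEnd ℂ) a * b‖ < 1 := by
    rw [norm_mul, RCLike.norm_conj]
    nlinarith [norm_nonneg a, norm_nonneg b]
  have h2 : (starRingEnd ℂ) a * b = 1 := by linear_combination -h
  rw [h2] at h1; simp at h1

private lemma num_lt_den {a b : ℂ} (ha : ‖a‖ < 1) (hb : ‖b‖ < 1) :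
    ‖b - a‖ < ‖1 - (starRingEnd ℂ) a * b‖ := by
  apply norm_lt_iff_aux
  have h := normSq_identity a b
  have h1 : Complex.normSq a < 1 := by rw [← norm_sq_eq]; nlinarith [norm_nonneg a]
  have h2 : Complex.normSq b < 1 := by rw [← norm_sq_eq]; nlinarith [norm_nonneg b]
  nlinarith

/-- Schwarz–Pick lemma. -/
private lemma schwarzPick {F : ℂ → ℂ} (hd : DifferentiableOn ℂ F (ball 0 1))
    (hmaps : Set.MapsTo F (ball 0 1) (ball 0 1)) {z₀ z : ℂ}
    (hz₀ : ‖z₀‖ < 1) (hz : ‖z‖ < 1) (hF0 : F z₀ = 0) :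
    ‖F z‖ ≤ ‖(z - z₀) / (1 - (starRingEnd ℂ) z₀ * z)‖ := by
  set c := (starRingEnd ℂ) z₀ with hc
  set σ : ℂ → ℂ := fun w => (w + z₀) / (1 + c * w) with hσ
  have hden : ∀ w : ℂ, ‖w‖ < 1 → 1 + c * w ≠ 0 := by
    intro w hw
    have := den_ne_zero hz₀ (show ‖-w‖ < 1 by simpa using hw)
    intro h; apply this; rw [mul_neg]; linear_combination h
  have hσmem : ∀ w : ℂ, ‖w‖ < 1 → ‖σ w‖ < 1 := by
    intro w hw
    have hnum : ‖w + z₀‖ < ‖1 + c * w‖ := by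
      have := num_lt_den (show ‖-z₀‖ < 1 by simpa using hz₀) hw
      simpa [sub_neg_eq_add, map_neg, neg_mul] using this
    rw [hσ]
    simp only [norm_div]
    rw [div_lt_one (lt_of_le_of_lt (norm_nonneg _) hnum)]
    exact hnum
  have hσdiff : DifferentiableOn ℂ σ (ball 0 1) := by
    apply DifferentiableOn.div
    · exact (differentiable_id.add_const z₀).differentiableOn
    · exact ((differentiable_const c).mul differentiable_id).differentiableOn.const_add 1
    · intro w hw; exact hden w (mem_ball_zero_iff.mp hw)
  have hσmaps : Set.MapsTo σ (ball 0 1) (ball 0 1) := by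
    intro w hw; rw [mem_ball_zero_iff] at *; exact hσmem w hw
  set w := (z - z₀) / (1 - c * z) with hwdef
  have hden2 : 1 - c * z ≠ 0 := den_ne_zero hz₀ hz
  have hwlt : ‖w‖ < 1 := by
    rw [hwdef]
    simp only [norm_div]
    have := num_lt_den hz₀ hz
    rw [div_lt_one (lt_of_le_of_lt (norm_nonneg _) this)]
    exact this
  have hcz₀ : 1 + c * w ≠ 0 := hden w hwlt
  have hσw : σ w = z := by
    rw [hσ]; simp only
    rw [div_eq_iff hcz₀, hwdef]
    have hden3 : 1 - z * c ≠ 0 := by rwa [mul_comm]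
    field_simp [hden2, hden3]
    ring
  have hG : DifferentiableOn ℂ (F ∘ σ) (ball 0 1) := hd.comp hσdiff hσmaps
  have hGm : Set.MapsTo (F ∘ σ) (ball 0 1) (ball 0 1) := hmaps.comp hσmaps
  have hG0 : (F ∘ σ) 0 = 0 := by
    have : σ 0 = z₀ := by rw [hσ]; simp
    simp [Function.comp, this, hF0]
  have := Complex.norm_le_norm_of_mapsTo_ball hG (hGm.mono_right ball_subset_closedBall) hG0
    (show ‖w‖ < 1 by exact hwlt)
  calc ‖F z‖ = ‖(F ∘ σ) w‖ := by rw [Function.comp, hσw]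
    _ ≤ ‖w‖ := by exact this

private lemma normSq_add_sub (x : ℂ) (e : ℝ) :
    Complex.normSq (x + (e:ℂ)) - Complex.normSq (x - (e:ℂ)) = 4 * e * x.re := by
  simp only [Complex.normSq_apply, Complex.add_re, Complex.add_im, Complex.sub_re, Complex.sub_im,
    Complex.ofReal_re, Complex.ofReal_im]
  ring

/-- bound on the pseudo-hyperbolic distance on a closed ball -/
private lemma rho_bound {z₀ z : ℂ} {r : ℝ} (hz₀ : ‖z₀‖ < 1) (hzr : ‖z‖ ≤ r) (hr : r < 1) :
    ‖(z - z₀) / (1 - (starRingEnd ℂ) z₀ * z)‖ < 1 ∧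
      (1 - r ^ 2) * (1 - ‖z₀‖ ^ 2) / 4 ≤ 1 - ‖(z - z₀) / (1 - (starRingEnd ℂ) z₀ * z)‖ ^ 2 := by
  have hz : ‖z‖ < 1 := lt_of_le_of_lt hzr hr
  have hr0 : 0 ≤ r := le_trans (norm_nonneg z) hzr
  have hden2 : (1:ℂ) - (starRingEnd ℂ) z₀ * z ≠ 0 := den_ne_zero hz₀ hz
  have hdpos : 0 < ‖(1:ℂ) - (starRingEnd ℂ) z₀ * z‖ := norm_pos_iff.mpr hden2
  have hdle : ‖(1:ℂ) - (starRingEnd ℂ) z₀ * z‖ ≤ 2 := by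
    calc ‖(1:ℂ) - (starRingEnd ℂ) z₀ * z‖ ≤ ‖(1:ℂ)‖ + ‖(starRingEnd ℂ) z₀ * z‖ := norm_sub_le _ _
      _ ≤ 2 := by
          rw [norm_mul, RCLike.norm_conj, norm_one]
          nlinarith [norm_nonneg z₀, norm_nonneg z]
  have hid : ‖(1:ℂ) - (starRingEnd ℂ) z₀ * z‖ ^ 2 - ‖z - z₀‖ ^ 2
      = (1 - ‖z₀‖ ^ 2) * (1 - ‖z‖ ^ 2) := by
    have h := normSq_identity z₀ z
    simp only [← norm_sq_eq] at h
    exact h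
  set ρ := ‖(z - z₀) / (1 - (starRingEnd ℂ) z₀ * z)‖ with hρ
  have hρ0 : 0 ≤ ρ := norm_nonneg _
  have hρsq : ρ ^ 2 = ‖z - z₀‖ ^ 2 / ‖(1:ℂ) - (starRingEnd ℂ) z₀ * z‖ ^ 2 := by
    rw [hρ, norm_div, div_pow]
  have key : 1 - ρ ^ 2
      = (1 - ‖z₀‖ ^ 2) * (1 - ‖z‖ ^ 2) / ‖(1:ℂ) - (starRingEnd ℂ) z₀ * z‖ ^ 2 := by
    have hd2 : ‖(1:ℂ) - (starRingEnd ℂ) z₀ * z‖ ^ 2 ≠ 0 := by positivity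
    rw [hρsq, ← hid, sub_div, div_self hd2]
  have ha : 0 < 1 - ‖z₀‖ ^ 2 := by nlinarith [norm_nonneg z₀]
  have hb : 0 < 1 - ‖z‖ ^ 2 := by nlinarith [norm_nonneg z]
  have hnum : 0 < (1 - ‖z₀‖ ^ 2) * (1 - ‖z‖ ^ 2) := mul_pos ha hb
  have hpos : 0 < 1 - ρ ^ 2 := by
    rw [key]; positivity
  refine ⟨by nlinarith, ?_⟩
  rw [key]
  have h4 : ‖(1:ℂ) - (starRingEnd ℂ) z₀ * z‖ ^ 2 ≤ 4 := by nlinarith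
  have step1 : (1 - r ^ 2) * (1 - ‖z₀‖ ^ 2) / 4 ≤ (1 - ‖z₀‖ ^ 2) * (1 - ‖z‖ ^ 2) / 4 := by
    have hzz : ‖z‖ ^ 2 ≤ r ^ 2 := by nlinarith [norm_nonneg z]
    have : (1 - r ^ 2) * (1 - ‖z₀‖ ^ 2) ≤ (1 - ‖z₀‖ ^ 2) * (1 - ‖z‖ ^ 2) := by
      rw [mul_comm]
      exact mul_le_mul_of_nonneg_left (by linarith) ha.le
    linarith
  refine le_trans step1 ?_
  exact div_le_div_of_nonneg_left (le_of_lt hnum) (by positivity) h4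

set_option maxHeartbeats 1000000 in
private lemma factor_est {f : ℂ → ℂ} (hd : DifferentiableOn ℂ f (ball 0 1))
    (hb : ∀ x ∈ ball (0:ℂ) 1, ‖f x‖ ≤ 1) {z₀ : ℂ} (hz₀ : ‖z₀‖ < 1)
    (hf0 : f z₀ ≠ 0) (ha1 : ‖f z₀‖ < 1) {z : ℂ} {r : ℝ} (hzr : ‖z‖ ≤ r) (hr : r < 1) :
    ‖f z * ((starRingEnd ℂ) (f z₀) / (‖f z₀‖ : ℂ)) - 1‖
      ≤ (32 / ((1 - r ^ 2) * (1 - ‖z₀‖ ^ 2)) + 1) * ((1 - ‖f z₀‖ ^ 2) / ‖f z₀‖) := by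
  have hz : ‖z‖ < 1 := lt_of_le_of_lt hzr hr
  have hr0 : 0 ≤ r := le_trans (norm_nonneg z) hzr
  have hz₀mem : z₀ ∈ ball (0:ℂ) 1 := mem_ball_zero_iff.mpr hz₀
  have hzmem : z ∈ ball (0:ℂ) 1 := mem_ball_zero_iff.mpr hz
  set a := ‖f z₀‖ with hadef
  have ha0 : 0 < a := norm_pos_iff.mpr hf0
  set ε : ℝ := 1 - a ^ 2 with hεdef
  have hε0 : 0 < ε := by nlinarith
  set g : ℂ → ℂ := fun x => 1 - (starRingEnd ℂ) (f z₀) * f x with hgdef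
  have hgre : ∀ x ∈ ball (0:ℂ) 1, 1 - a ≤ (g x).re := by
    intro x hx
    have h1 : ((starRingEnd ℂ) (f z₀) * f x).re ≤ ‖(starRingEnd ℂ) (f z₀) * f x‖ := by
      exact Complex.re_le_norm _
    have h2 : ‖(starRingEnd ℂ) (f z₀) * f x‖ ≤ a := by
      rw [norm_mul, RCLike.norm_conj]
      calc a * ‖f x‖ ≤ a * 1 := by
            exact mul_le_mul_of_nonneg_left (hb x hx) ha0.le
        _ = a := mul_one a
    have : (g x).re = 1 - ((starRingEnd ℂ) (f z₀) * f x).re := by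
      simp [hgdef, Complex.sub_re, Complex.one_re]
    rw [this]; linarith
  have hgre0 : ∀ x ∈ ball (0:ℂ) 1, 0 < (g x).re := fun x hx =>
    lt_of_lt_of_le (by linarith) (hgre x hx)
  set F : ℂ → ℂ := fun x => (g x - (ε:ℂ)) / (g x + (ε:ℂ)) with hFdef
  have hFden : ∀ x ∈ ball (0:ℂ) 1, g x + (ε:ℂ) ≠ 0 := by
    intro x hx h
    have h1 := hgre0 x hx
    have h2 : (g x + (ε:ℂ)).re = (g x).re + ε := by
      simp [Complex.add_re, Complex.ofReal_re]
    rw [h] at h2; simp at h2; linarith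
  have hgdiff : DifferentiableOn ℂ g (ball 0 1) := by
    exact (differentiableOn_const (1:ℂ)).sub (hd.const_mul _)
  have hFdiff : DifferentiableOn ℂ F (ball 0 1) :=
    (hgdiff.sub_const _).div (hgdiff.add_const _) hFden
  have hFmaps : Set.MapsTo F (ball 0 1) (ball 0 1) := by
    intro x hx
    rw [mem_ball_zero_iff]
    have key : Complex.normSq (g x - (ε:ℂ)) < Complex.normSq (g x + (ε:ℂ)) := by
      have h := normSq_add_sub (g x) ε
      nlinarith [hgre0 x hx]
    have hlt : ‖g x - (ε:ℂ)‖ < ‖g x + (ε:ℂ)‖ := norm_lt_iff_aux key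
    have hp : 0 < ‖g x + (ε:ℂ)‖ := norm_pos_iff.mpr (hFden x hx)
    simp only [hFdef]
    rw [norm_div, div_lt_one hp]
    exact hlt
  have hgz₀ : g z₀ = (ε:ℂ) := by
    simp only [hgdef]
    have h1 : (starRingEnd ℂ) (f z₀) * f z₀ = ((Complex.normSq (f z₀) : ℝ) : ℂ) := by
      rw [mul_comm, Complex.mul_conj]
    rw [h1, ← norm_sq_eq, hεdef, hadef]
    push_cast
    ring
  have hF0 : F z₀ = 0 := by
    simp only [hFdef, hgz₀, sub_self, zero_div]
  have hSP := schwarzPick hFdiff hFmaps hz₀ hz hF0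
  obtain ⟨hρ1, hρ2⟩ := rho_bound hz₀ hzr hr
  set ρ := ‖(z - z₀) / (1 - (starRingEnd ℂ) z₀ * z)‖ with hρdef
  have hρ0 : 0 ≤ ρ := norm_nonneg _
  have hprod : 0 < (1 - r ^ 2) * (1 - ‖z₀‖ ^ 2) := by
    have ha' : 0 < 1 - ‖z₀‖ ^ 2 := by nlinarith [norm_nonneg z₀]
    have hb' : 0 < 1 - r ^ 2 := by nlinarith
    exact mul_pos hb' ha'
  -- derive ‖g z‖ bound
  have hdp : 0 < ‖g z + (ε:ℂ)‖ := norm_pos_iff.mpr (hFden z hzmem)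
  have e1 : ‖g z - (ε:ℂ)‖ ≤ ρ * ‖g z + (ε:ℂ)‖ := by
    have : ‖F z‖ = ‖g z - (ε:ℂ)‖ / ‖g z + (ε:ℂ)‖ := by
      simp only [hFdef]; rw [norm_div]
    rw [this, div_le_iff₀ hdp] at hSP
    exact hSP
  have e2 : ‖g z + (ε:ℂ)‖ ≤ ‖g z - (ε:ℂ)‖ + 2 * ε := by
    have h : g z + (ε:ℂ) = (g z - (ε:ℂ)) + ((2*ε : ℝ):ℂ) := by push_cast; ring
    calc ‖g z + (ε:ℂ)‖ = ‖(g z - (ε:ℂ)) + ((2*ε : ℝ):ℂ)‖ := by rw [← h]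
      _ ≤ ‖g z - (ε:ℂ)‖ + ‖((2*ε : ℝ):ℂ)‖ := norm_add_le _ _
      _ = ‖g z - (ε:ℂ)‖ + 2 * ε := by
          rw [Complex.norm_real, Real.norm_eq_abs, abs_of_pos (by linarith)]
  have e3 : ‖g z - (ε:ℂ)‖ * (1 - ρ) ≤ 2 * ε := by nlinarith [norm_nonneg (g z - (ε:ℂ))]
  have e4 : ‖g z‖ ≤ ‖g z - (ε:ℂ)‖ + ε := by
    calc ‖g z‖ = ‖(g z - (ε:ℂ)) + (ε:ℂ)‖ := by ring_nf
      _ ≤ ‖g z - (ε:ℂ)‖ + ‖((ε:ℝ):ℂ)‖ := norm_add_le _ _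
      _ = ‖g z - (ε:ℂ)‖ + ε := by rw [Complex.norm_real, Real.norm_eq_abs, abs_of_pos hε0]
  have e5 : ‖g z‖ * (1 - ρ ^ 2) ≤ 6 * ε := by
    nlinarith [norm_nonneg (g z), norm_nonneg (g z - (ε:ℂ))]
  have e6 : ‖g z‖ * ((1 - r ^ 2) * (1 - ‖z₀‖ ^ 2) / 4) ≤ 6 * ε := by
    calc ‖g z‖ * ((1 - r ^ 2) * (1 - ‖z₀‖ ^ 2) / 4) ≤ ‖g z‖ * (1 - ρ ^ 2) :=
          mul_le_mul_of_nonneg_left hρ2 (norm_nonneg _)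
      _ ≤ 6 * ε := e5
  have e7 : ‖g z‖ ≤ 24 * ε / ((1 - r ^ 2) * (1 - ‖z₀‖ ^ 2)) := by
    rw [le_div_iff₀ hprod]
    nlinarith
  -- final computation
  have hane : (a:ℂ) ≠ 0 := by
    simp only [ne_eq, Complex.ofReal_eq_zero]
    exact ha0.ne'
  have hu : f z * ((starRingEnd ℂ) (f z₀) / (a:ℂ)) - 1 = ((1 - g z) - (a:ℂ)) / (a:ℂ) := by
    simp only [hgdef]
    field_simp
    ring
  rw [hu, norm_div, Complex.norm_real, Real.norm_eq_abs, abs_of_pos ha0]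
  have e8 : ‖(1 : ℂ) - g z - (a:ℂ)‖ ≤ ‖g z‖ + ε := by
    have h : (1:ℂ) - g z - (a:ℂ) = -(g z) + (((1 - a : ℝ)):ℂ) := by push_cast; ring
    calc ‖(1:ℂ) - g z - (a:ℂ)‖ = ‖-(g z) + (((1 - a : ℝ)):ℂ)‖ := by rw [h]
      _ ≤ ‖g z‖ + ‖(((1 - a : ℝ)):ℂ)‖ := by
          refine le_trans (norm_add_le _ _) ?_
          rw [norm_neg]
      _ ≤ ‖g z‖ + ε := by
          rw [Complex.norm_real, Real.norm_eq_abs, _root_.abs_of_nonneg (by linarith)]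
          nlinarith
  have e9 : ‖(1:ℂ) - g z - (a:ℂ)‖ ≤ 24 * ε / ((1 - r ^ 2) * (1 - ‖z₀‖ ^ 2)) + ε :=
    le_trans e8 (by linarith)
  calc ‖(1:ℂ) - g z - (a:ℂ)‖ / a ≤ (24 * ε / ((1 - r ^ 2) * (1 - ‖z₀‖ ^ 2)) + ε) / a := by
        exact (div_le_div_iff_of_pos_right ha0).mpr e9
    _ ≤ ((32 / ((1 - r ^ 2) * (1 - ‖z₀‖ ^ 2)) + 1) * ε) / a := by
        have h1 : 24 * ε / ((1 - r ^ 2) * (1 - ‖z₀‖ ^ 2))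
            ≤ 32 * ε / ((1 - r ^ 2) * (1 - ‖z₀‖ ^ 2)) :=
          (div_le_div_iff_of_pos_right hprod).mpr (by linarith)
        have h2 : (32 / ((1 - r ^ 2) * (1 - ‖z₀‖ ^ 2)) + 1) * ε
            = 32 * ε / ((1 - r ^ 2) * (1 - ‖z₀‖ ^ 2)) + ε := by
          rw [add_mul, one_mul, div_mul_eq_mul_div]
        exact (div_le_div_iff_of_pos_right ha0).mpr (by linarith)
    _ = (32 / ((1 - r ^ 2) * (1 - ‖z₀‖ ^ 2)) + 1) * (ε / a) := mul_div_assoc _ _ _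
    _ = (32 / ((1 - r ^ 2) * (1 - ‖z₀‖ ^ 2)) + 1) * ((1 - a ^ 2) / a) := by rw [hεdef]

private lemma norm_prod_sub_one {ι : Type*} (D : Finset ι) (u : ι → ℂ)
    (h : ∀ i ∈ D, ‖u i‖ ≤ 1) : ‖(∏ i ∈ D, u i) - 1‖ ≤ ∑ i ∈ D, ‖u i - 1‖ := by
  induction D using Finset.cons_induction with
  | empty => simp
  | cons a D ha ih =>
    rw [Finset.prod_cons, Finset.sum_cons]
    have h1 := ih fun i hi => h i (Finset.mem_cons_of_mem hi)
    have ha1 : ‖u a‖ ≤ 1 := h a (Finset.mem_cons_self a D)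
    have key : u a * ∏ i ∈ D, u i - 1 = u a * ((∏ i ∈ D, u i) - 1) + (u a - 1) := by ring
    calc ‖u a * ∏ i ∈ D, u i - 1‖
        ≤ ‖u a * ((∏ i ∈ D, u i) - 1)‖ + ‖u a - 1‖ := by rw [key]; exact norm_add_le _ _
      _ = ‖u a‖ * ‖(∏ i ∈ D, u i) - 1‖ + ‖u a - 1‖ := by rw [norm_mul]
      _ ≤ 1 * ‖(∏ i ∈ D, u i) - 1‖ + ‖u a - 1‖ := by
          have := mul_le_mul_of_nonneg_right ha1 (norm_nonneg ((∏ i ∈ D, u i) - 1))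
          linarith
      _ ≤ ‖u a - 1‖ + ∑ i ∈ D, ‖u i - 1‖ := by rw [one_mul]; linarith
      _ = _ := by ring

private lemma one_sub_sum_le_prod {ι : Type*} (D : Finset ι) (e : ι → ℝ)
    (h0 : ∀ i ∈ D, 0 ≤ e i) (h1 : ∀ i ∈ D, e i ≤ 1) :
    1 - ∑ i ∈ D, e i ≤ ∏ i ∈ D, (1 - e i) := by
  induction D using Finset.cons_induction with
  | empty => simp
  | cons a D ha ih =>
    rw [Finset.prod_cons, Finset.sum_cons]
    have ih' := ih (fun i hi => h0 i (Finset.mem_cons_of_mem hi))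
      (fun i hi => h1 i (Finset.mem_cons_of_mem hi))
    have ha0 : 0 ≤ e a := h0 a (Finset.mem_cons_self a D)
    have ha1 : e a ≤ 1 := h1 a (Finset.mem_cons_self a D)
    have hsum0 : 0 ≤ ∑ i ∈ D, e i := Finset.sum_nonneg fun i hi => h0 i (Finset.mem_cons_of_mem hi)
    nlinarith [mul_le_mul_of_nonneg_left ih' (by linarith : (0:ℝ) ≤ 1 - e a)]

private lemma diffOn_prod {s : Set ℂ} (D : Finset ℕ) (u : ℕ → ℂ → ℂ)
    (h : ∀ n ∈ D, DifferentiableOn ℂ (u n) s) :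
    DifferentiableOn ℂ (fun w => ∏ n ∈ D, u n w) s := by
  induction D using Finset.cons_induction with
  | empty => simpa using differentiableOn_const (1:ℂ)
  | cons a D ha ih =>
    simp only [Finset.prod_cons]
    exact (h a (Finset.mem_cons_self a D)).mul (ih fun n hn => h n (Finset.mem_cons_of_mem hn))

set_option maxHeartbeats 1000000 in
theorem stmt_6 (z : ℕ → ℂ) (hz : ∀ n, ‖z n‖ < 1) (m : ℕ) (f : ℕ → ℂ → ℂ)
    (hdiff : ∀ n, n ≠ m → DifferentiableOn ℂ (f n) (Metric.ball 0 1))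
    (hbd : ∀ n, n ≠ m → ∀ x ∈ Metric.ball (0 : ℂ) 1, ‖f n x‖ ≤ 1)
    (hzero : ∀ n, n ≠ m → f n (z n) = 0)
    (hne : ∀ n, n ≠ m → f n (z m) ≠ 0)
    (hsum : Summable fun n : {n : ℕ // n ≠ m} => 1 - ‖f (n : ℕ) (z m)‖ ^ 2) :
    ∃ φ : ℂ → ℂ, DifferentiableOn ℂ φ (Metric.ball 0 1) ∧
      (∀ x ∈ Metric.ball (0 : ℂ) 1, ‖φ x‖ ≤ 1) ∧
      (∀ n, n ≠ m → φ (z n) = 0) ∧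
      0 < sInf {x : ℝ | ∃ F : Finset ℕ, m ∉ F ∧ x = ∏ n ∈ F, ‖f n (z m)‖} ∧
      sInf {x : ℝ | ∃ F : Finset ℕ, m ∉ F ∧ x = ∏ n ∈ F, ‖f n (z m)‖} ≤ ‖φ (z m)‖ := by
  classical
  have hzm : z m ∈ Metric.ball (0:ℂ) 1 := mem_ball_zero_iff.mpr (hz m)
  set S := {x : ℝ | ∃ F : Finset ℕ, m ∉ F ∧ x = ∏ n ∈ F, ‖f n (z m)‖} with hS
  have ha0 : ∀ n, n ≠ m → 0 < ‖f n (z m)‖ := fun n hn => norm_pos_iff.mpr (hne n hn)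
  have hale : ∀ n, n ≠ m → ‖f n (z m)‖ ≤ 1 := fun n hn => hbd n hn _ hzm
  have ha1 : ∀ n, n ≠ m → ‖f n (z m)‖ < 1 := by
    intro n hn
    rcases lt_or_eq_of_le (hale n hn) with h | h
    · exact h
    · exfalso
      have hmax : IsMaxOn (norm ∘ f n) (Metric.ball 0 1) (z m) := by
        intro x hx
        simp only [Function.comp_apply, Set.mem_setOf_eq]
        exact le_trans (hbd n hn x hx) (le_of_eq h.symm)
      have heq := Complex.eqOn_of_isPreconnected_of_isMaxOn_norm
        (convex_ball (0:ℂ) 1).isPreconnected Metric.isOpen_ball (hdiff n hn) hzm hmax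
      have h1 := heq (mem_ball_zero_iff.mpr (hz n))
      rw [hzero n hn] at h1
      exact hne n hn h1.symm
  -- lower bound for elements of S
  obtain ⟨s₀, hs₀⟩ := hsum.vanishing (Metric.ball_mem_nhds (0:ℝ) one_half_pos)
  set L : ℝ := (∏ x ∈ s₀, ‖f x.val (z m)‖) * (1/2) with hL
  have hL0 : 0 < L := mul_pos (Finset.prod_pos fun x _ => ha0 x.val x.prop) one_half_pos
  have hlow : ∀ y ∈ S, L ≤ y := by
    rintro y ⟨F, hmF, rfl⟩
    have hall : ∀ n ∈ F, n ≠ m := fun n hn h => hmF (h ▸ hn)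
    set D : Finset {n : ℕ // n ≠ m} := F.subtype (· ≠ m) with hD
    have hFD : ∏ n ∈ F, ‖f n (z m)‖ = ∏ x ∈ D, ‖f x.val (z m)‖ := by
      rw [hD, Finset.prod_subtype_eq_prod_filter (fun n => ‖f n (z m)‖), Finset.filter_true_of_mem hall]
    rw [hFD]
    have hsplit : ∏ x ∈ D, ‖f x.val (z m)‖
        = (∏ x ∈ D ∩ s₀, ‖f x.val (z m)‖) * ∏ x ∈ D \ s₀, ‖f x.val (z m)‖ :=
      (Finset.prod_inter_mul_prod_diff D s₀ _).symm
    have h1 : ∏ x ∈ s₀, ‖f x.val (z m)‖ ≤ ∏ x ∈ D ∩ s₀, ‖f x.val (z m)‖ := by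
      have hsplit2 : ∏ x ∈ s₀, ‖f x.val (z m)‖
          = (∏ x ∈ s₀ ∩ D, ‖f x.val (z m)‖) * ∏ x ∈ s₀ \ D, ‖f x.val (z m)‖ :=
        (Finset.prod_inter_mul_prod_diff s₀ D _).symm
      rw [hsplit2, Finset.inter_comm]
      have hle1 : ∏ x ∈ s₀ \ D, ‖f x.val (z m)‖ ≤ 1 :=
        Finset.prod_le_one (fun x _ => norm_nonneg _) (fun x _ => hale x.val x.prop)
      have hpos : 0 ≤ ∏ x ∈ D ∩ s₀, ‖f x.val (z m)‖ :=
        Finset.prod_nonneg fun x _ => norm_nonneg _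
      exact mul_le_of_le_one_right hpos hle1
    have h2 : (1:ℝ)/2 ≤ ∏ x ∈ D \ s₀, ‖f x.val (z m)‖ := by
      have hsum2 := hs₀ (D \ s₀) Finset.sdiff_disjoint
      rw [Metric.mem_ball, dist_zero_right, Real.norm_eq_abs] at hsum2
      have hsum3 : ∑ x ∈ D \ s₀, (1 - ‖f x.val (z m)‖^2) < 1/2 :=
        lt_of_le_of_lt (le_abs_self _) hsum2
      have hw := one_sub_sum_le_prod (D \ s₀) (fun x => 1 - ‖f x.val (z m)‖^2)
        (fun x _ => by
          show (0:ℝ) ≤ 1 - ‖f x.val (z m)‖^2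
          nlinarith [hale x.val x.prop, norm_nonneg (f x.val (z m))])
        (fun x _ => by
          show 1 - ‖f x.val (z m)‖^2 ≤ 1
          nlinarith [sq_nonneg ‖f x.val (z m)‖])
      have he : (∏ x ∈ D \ s₀, (1 - (1 - ‖f x.val (z m)‖^2)))
          = ∏ x ∈ D \ s₀, ‖f x.val (z m)‖^2 :=
        Finset.prod_congr rfl fun x _ => by ring
      have hsq : (∏ x ∈ D \ s₀, ‖f x.val (z m)‖^2) ≤ ∏ x ∈ D \ s₀, ‖f x.val (z m)‖ :=
        Finset.prod_le_prod (fun x _ => sq_nonneg _)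
          (fun x _ => by nlinarith [hale x.val x.prop, norm_nonneg (f x.val (z m))])
      rw [he] at hw
      linarith
    have hpos2 : 0 ≤ ∏ x ∈ D \ s₀, ‖f x.val (z m)‖ := Finset.prod_nonneg fun x _ => norm_nonneg _
    calc L = (∏ x ∈ s₀, ‖f x.val (z m)‖) * (1/2) := hL
      _ ≤ (∏ x ∈ D ∩ s₀, ‖f x.val (z m)‖) * ∏ x ∈ D \ s₀, ‖f x.val (z m)‖ := by
          apply mul_le_mul h1 h2 (by norm_num)
          exact Finset.prod_nonneg fun x _ => norm_nonneg _
      _ = ∏ x ∈ D, ‖f x.val (z m)‖ := hsplit.symm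
  have hSne : S.Nonempty := ⟨1, ∅, by simp⟩
  have hbdd : BddBelow S := ⟨L, hlow⟩
  have hp0 : 0 < sInf S := lt_of_lt_of_le hL0 (le_csInf hSne hlow)
  set p := sInf S with hpdef
  have hpa : ∀ n, n ≠ m → p ≤ ‖f n (z m)‖ := fun n hn => csInf_le hbdd
    ⟨{n}, Finset.notMem_singleton.mpr (Ne.symm hn), (Finset.prod_singleton _ _).symm⟩
  -- the normalized factors and partial products
  set u : ℕ → ℂ → ℂ :=
    fun n w => f n w * ((starRingEnd ℂ) (f n (z m)) / (‖f n (z m)‖ : ℂ)) with hu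
  set g : ℕ → ℂ → ℂ := fun N w => ∏ n ∈ (Finset.range N).erase m, u n w with hg
  have hconst1 : ∀ n, n ≠ m → ‖(starRingEnd ℂ) (f n (z m)) / (‖f n (z m)‖ : ℂ)‖ = 1 := by
    intro n hn
    rw [norm_div, RCLike.norm_conj, Complex.norm_real, Real.norm_eq_abs,
      abs_of_pos (ha0 n hn), div_self (ha0 n hn).ne']
  have hunorm : ∀ n, n ≠ m → ∀ w, ‖u n w‖ = ‖f n w‖ := by
    intro n hn w
    rw [hu]
    simp only
    rw [norm_mul, hconst1 n hn, mul_one]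
  have huzm : ∀ n, n ≠ m → u n (z m) = ((‖f n (z m)‖ : ℝ) : ℂ) := by
    intro n hn
    have hcne : ((‖f n (z m)‖ : ℝ) : ℂ) ≠ 0 := by
      simp only [ne_eq, Complex.ofReal_eq_zero]
      exact (ha0 n hn).ne'
    rw [hu]
    simp only
    rw [← mul_div_assoc, Complex.mul_conj, ← norm_sq_eq]
    rw [show ((‖f n (z m)‖^2 : ℝ) : ℂ) = ((‖f n (z m)‖:ℝ):ℂ)^2 by push_cast; ring]
    rw [pow_two, mul_div_assoc, div_self hcne, mul_one]
  have hudiff : ∀ n, n ≠ m → DifferentiableOn ℂ (u n) (Metric.ball 0 1) :=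
    fun n hn => (hdiff n hn).mul_const _
  have hgdiff : ∀ N, DifferentiableOn ℂ (g N) (Metric.ball 0 1) := by
    intro N
    exact diffOn_prod _ _ fun n hn => hudiff n (Finset.ne_of_mem_erase hn)
  have hgnorm : ∀ N, ∀ w ∈ Metric.ball (0:ℂ) 1, ‖g N w‖ ≤ 1 := by
    intro N w hw
    rw [hg]
    simp only
    rw [norm_prod]
    refine Finset.prod_le_one (fun n _ => norm_nonneg _) ?_
    intro n hn
    rw [hunorm n (Finset.ne_of_mem_erase hn)]
    exact hbd n (Finset.ne_of_mem_erase hn) w hw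
  -- vanishing tails
  have htail : ∀ δ : ℝ, 0 < δ → ∃ N₀ : ℕ, ∀ D : Finset ℕ, (∀ n ∈ D, n ≠ m) →
      (∀ n ∈ D, N₀ ≤ n) → ∑ n ∈ D, (1 - ‖f n (z m)‖^2) < δ := by
    intro δ hδ
    obtain ⟨t₀, ht₀⟩ := hsum.vanishing (Metric.ball_mem_nhds (0:ℝ) hδ)
    refine ⟨(t₀.sup fun x => x.val) + 1, ?_⟩
    intro D hDm hDN
    set D' : Finset {n : ℕ // n ≠ m} := D.subtype (· ≠ m) with hD'
    have hsum_eq : (∑ x ∈ D', (1 - ‖f x.val (z m)‖^2)) = ∑ n ∈ D, (1 - ‖f n (z m)‖^2) := by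
      rw [hD', Finset.sum_subtype_eq_sum_filter (fun n => 1 - ‖f n (z m)‖^2), Finset.filter_true_of_mem hDm]
    have hdisj : Disjoint D' t₀ := by
      rw [Finset.disjoint_left]
      intro x hx hxt
      have h1 : x.val ≤ t₀.sup fun y => y.val := Finset.le_sup hxt
      have h2 : (t₀.sup fun y => y.val) + 1 ≤ x.val :=
        hDN x.val (Finset.mem_subtype.mp hx)
      omega
    have hin := ht₀ D' hdisj
    rw [Metric.mem_ball, dist_zero_right, Real.norm_eq_abs] at hin
    calc ∑ n ∈ D, (1 - ‖f n (z m)‖^2) = ∑ x ∈ D', (1 - ‖f x.val (z m)‖^2) := hsum_eq.symm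
      _ ≤ |∑ x ∈ D', (1 - ‖f x.val (z m)‖^2)| := le_abs_self _
      _ < δ := hin
  -- uniform Cauchy on closed balls
  have hUC : ∀ r : ℝ, 0 ≤ r → r < 1 →
      UniformCauchySeqOn g Filter.atTop (Metric.closedBall 0 r) := by
    intro r hr0 hr1
    rw [Metric.uniformCauchySeqOn_iff]
    intro ε hε
    have hprodr : 0 < (1 - r^2) * (1 - ‖z m‖^2) := by
      have := hz m
      have := norm_nonneg (z m)
      apply mul_pos <;> nlinarith
    set K : ℝ := (32 / ((1 - r^2) * (1 - ‖z m‖^2)) + 1) / p with hK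
    have hK0 : 0 < K := div_pos (by positivity) hp0
    obtain ⟨N₀, hN₀⟩ := htail (ε / K) (div_pos hε hK0)
    refine ⟨N₀, ?_⟩
    have main : ∀ M N, N₀ ≤ N → N ≤ M → ∀ x ∈ Metric.closedBall (0:ℂ) r,
        dist (g M x) (g N x) < ε := by
      intro M N hN₀N hNM x hxcb
      rw [Metric.mem_closedBall, dist_zero_right] at hxcb
      have hx1 : ‖x‖ < 1 := lt_of_le_of_lt hxcb hr1
      have hxmem : x ∈ Metric.ball (0:ℂ) 1 := mem_ball_zero_iff.mpr hx1
      set E : Finset ℕ := ((Finset.range M).erase m) \ ((Finset.range N).erase m) with hE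
      have hsub : (Finset.range N).erase m ⊆ (Finset.range M).erase m :=
        Finset.erase_subset_erase m (Finset.range_subset_range.mpr hNM)
      have hgM : g M x = g N x * ∏ n ∈ E, u n x := by
        rw [hg]
        simp only
        rw [← Finset.prod_sdiff hsub, mul_comm]
      have hEm : ∀ n ∈ E, n ≠ m := fun n hn =>
        Finset.ne_of_mem_erase (Finset.mem_sdiff.mp hn).1
      have hEN : ∀ n ∈ E, N₀ ≤ n := by
        intro n hn
        rcases Finset.mem_sdiff.mp hn with ⟨hn1, hn2⟩
        have hnm := Finset.ne_of_mem_erase hn1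
        by_contra hlt
        push_neg at hlt
        exact hn2 (Finset.mem_erase.mpr ⟨hnm, Finset.mem_range.mpr (lt_of_lt_of_le hlt hN₀N)⟩)
      have hfac : ∀ n ∈ E, ‖u n x - 1‖ ≤ K * (1 - ‖f n (z m)‖^2) := by
        intro n hn
        have hnm := hEm n hn
        have h1 := factor_est (hdiff n hnm) (hbd n hnm) (hz m) (hne n hnm) (ha1 n hnm) hxcb hr1
        refine le_trans h1 ?_
        have hC : (0:ℝ) < 32 / ((1 - r^2) * (1 - ‖z m‖^2)) + 1 := by positivity
        have hεn : (0:ℝ) ≤ 1 - ‖f n (z m)‖^2 := by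
          nlinarith [hale n hnm, norm_nonneg (f n (z m))]
        have haεp : (1 - ‖f n (z m)‖^2) / ‖f n (z m)‖ ≤ (1 - ‖f n (z m)‖^2) / p :=
          div_le_div_of_nonneg_left hεn hp0 (hpa n hnm)
        calc (32 / ((1 - r^2) * (1 - ‖z m‖^2)) + 1) * ((1 - ‖f n (z m)‖^2) / ‖f n (z m)‖)
            ≤ (32 / ((1 - r^2) * (1 - ‖z m‖^2)) + 1) * ((1 - ‖f n (z m)‖^2) / p) :=
              mul_le_mul_of_nonneg_left haεp hC.le
          _ = K * (1 - ‖f n (z m)‖^2) := by rw [hK]; ring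
      have hsumE : (∑ n ∈ E, (1 - ‖f n (z m)‖^2)) < ε / K := hN₀ E hEm hEN
      have hprodbd : ‖(∏ n ∈ E, u n x) - 1‖ ≤ K * ∑ n ∈ E, (1 - ‖f n (z m)‖^2) := by
        refine le_trans (norm_prod_sub_one E _ ?_) ?_
        · intro n hn
          rw [hunorm n (hEm n hn)]
          exact hbd n (hEm n hn) x hxmem
        · rw [Finset.mul_sum]
          exact Finset.sum_le_sum hfac
      have hgNle : ‖g N x‖ ≤ 1 := hgnorm N x hxmem
      calc dist (g M x) (g N x) = ‖g N x * (∏ n ∈ E, u n x) - g N x‖ := by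
            rw [dist_eq_norm, hgM]
        _ = ‖g N x‖ * ‖(∏ n ∈ E, u n x) - 1‖ := by
            rw [← norm_mul]; congr 1; ring
        _ ≤ 1 * (K * ∑ n ∈ E, (1 - ‖f n (z m)‖^2)) := by
            apply mul_le_mul hgNle hprodbd (norm_nonneg _) (by norm_num)
        _ < ε := by
            rw [one_mul]
            calc K * ∑ n ∈ E, (1 - ‖f n (z m)‖^2) < K * (ε / K) :=
                  mul_lt_mul_of_pos_left hsumE hK0
              _ = ε := by field_simp
    intro M hM N hN x hx
    rcases le_total N M with h | h
    · exact main M N hN h x hx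
    · rw [dist_comm]; exact main N M hM h x hx
  -- construct the limit
  have hcauchy : ∀ x : ℂ, ‖x‖ < 1 → CauchySeq fun N => g N x := by
    intro x hx
    refine (hUC ‖x‖ (norm_nonneg x) hx).cauchySeq ?_
    rw [Metric.mem_closedBall, dist_zero_right]
  set φ : ℂ → ℂ := fun x => Filter.limUnder Filter.atTop fun N => g N x with hφ
  have htend : ∀ x : ℂ, ‖x‖ < 1 →
      Filter.Tendsto (fun N => g N x) Filter.atTop (nhds (φ x)) := by
    intro x hx
    exact (hcauchy x hx).tendsto_limUnder
  have hTLU : TendstoLocallyUniformlyOn g φ Filter.atTop (Metric.ball 0 1) := by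
    rw [tendstoLocallyUniformlyOn_iff_forall_isCompact Metric.isOpen_ball]
    intro K hKsub hKc
    rcases K.eq_empty_or_nonempty with rfl | hKne
    · intro v _; simp
    obtain ⟨x₀, hx₀K, hx₀max⟩ := hKc.exists_isMaxOn hKne continuous_norm.continuousOn
    have hx₀ : ‖x₀‖ < 1 := mem_ball_zero_iff.mp (hKsub hx₀K)
    have hKsub2 : K ⊆ Metric.closedBall 0 ‖x₀‖ := by
      intro x hx
      rw [Metric.mem_closedBall, dist_zero_right]
      exact hx₀max hx
    have hTU : TendstoUniformlyOn g φ Filter.atTop (Metric.closedBall 0 ‖x₀‖) := by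
      apply (hUC ‖x₀‖ (norm_nonneg _) hx₀).tendstoUniformlyOn_of_tendsto
      intro x hx
      rw [Metric.mem_closedBall, dist_zero_right] at hx
      exact htend x (lt_of_le_of_lt hx hx₀)
    exact hTU.mono hKsub2
  have hφdiff : DifferentiableOn ℂ φ (Metric.ball 0 1) :=
    hTLU.differentiableOn (Filter.Eventually.of_forall hgdiff) Metric.isOpen_ball
  refine ⟨φ, hφdiff, ?_, ?_, hp0, ?_⟩
  · intro x hx
    have hx1 : ‖x‖ < 1 := mem_ball_zero_iff.mp hx
    have hn : Filter.Tendsto (fun N => ‖g N x‖) Filter.atTop (nhds ‖φ x‖) :=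
      (htend x hx1).norm
    exact le_of_tendsto hn (Filter.Eventually.of_forall fun N => hgnorm N x hx)
  · intro n hn
    have hev : ∀ᶠ N in Filter.atTop, g N (z n) = 0 := by
      rw [Filter.eventually_atTop]
      refine ⟨n + 1, fun N hN => ?_⟩
      rw [hg]
      simp only
      apply Finset.prod_eq_zero (i := n)
      · exact Finset.mem_erase.mpr ⟨hn, Finset.mem_range.mpr (by omega)⟩
      · rw [hu]; simp only; rw [hzero n hn, zero_mul]
    have h0 : Filter.Tendsto (fun N => g N (z n)) Filter.atTop (nhds 0) :=
      Filter.Tendsto.congr' (hev.mono fun N hN => hN.symm) tendsto_const_nhds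
    exact tendsto_nhds_unique (htend (z n) (hz n)) h0
  · have hgzm : ∀ N, ‖g N (z m)‖ ∈ S := by
      intro N
      refine ⟨(Finset.range N).erase m, Finset.notMem_erase m _, ?_⟩
      have heq : g N (z m)
          = ((∏ n ∈ (Finset.range N).erase m, ‖f n (z m)‖ : ℝ) : ℂ) := by
        rw [hg]
        simp only
        rw [Finset.prod_congr rfl (fun n hn => huzm n (Finset.ne_of_mem_erase hn))]
        push_cast
        ring
      rw [heq, Complex.norm_real, Real.norm_eq_abs,
        _root_.abs_of_nonneg (Finset.prod_nonneg fun n _ => norm_nonneg _)]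
    have hge : ∀ N, p ≤ ‖g N (z m)‖ := fun N => csInf_le hbdd (hgzm N)
    have hn : Filter.Tendsto (fun N => ‖g N (z m)‖) Filter.atTop (nhds ‖φ (z m)‖) :=
      (htend (z m) (hz m)).norm
    exact ge_of_tendsto hn (Filter.Eventually.of_forall hge)
end

section
/- Let (z_n)_{n≥1} be a sequence of distinct points in the open unit disc 𝔻 ⊂ ℂ, and suppose that for every bounded sequence (w_n) of complex numbers there exists a bounded holomorphic function f : 𝔻 → ℂ with f(z_n) = w_n for all n. Then there exists δ > 0 such that for every n there is a holomorphic function f_n : 𝔻 → ℂ with |f_n(z)| ≤ 1 for all z ∈ 𝔻, f_n(z_m) = 0 for all m ≠ n, and |f_n(z_n)| ≥ δ. -/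
open BoundedContinuousFunction Metric Set

noncomputable section StmtAux

open Classical in
/-- Extend a function on the closed-off unit ball to all of ℂ by zero. -/
def stmtExt (f : ↥(ball (0:ℂ) 1) → ℂ) : ℂ → ℂ :=
  fun w => if h : w ∈ ball (0:ℂ) 1 then f ⟨w, h⟩ else 0

lemma stmtExt_eq (f : ↥(ball (0:ℂ) 1) → ℂ) {w : ℂ} (h : w ∈ ball (0:ℂ) 1) :
    stmtExt f w = f ⟨w, h⟩ := by simp [stmtExt, h]

/-- Bounded holomorphic functions on the unit disc, as a submodule of bounded continuous
functions. -/
def stmtHinf : Submodule ℂ (↥(ball (0:ℂ) 1) →ᵇ ℂ) where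
  carrier := {f | DifferentiableOn ℂ (stmtExt f) (ball 0 1)}
  add_mem' := by
    intro f g hf hg
    have : stmtExt (⇑(f + g)) = fun w => stmtExt f w + stmtExt g w := by
      funext w
      by_cases h : w ∈ ball (0:ℂ) 1 <;> simp [stmtExt, h]
    rw [Set.mem_setOf_eq, this]
    exact hf.add hg
  zero_mem' := by
    have : stmtExt (⇑(0 : ↥(ball (0:ℂ) 1) →ᵇ ℂ)) = fun _ => (0:ℂ) := by
      funext w
      by_cases h : w ∈ ball (0:ℂ) 1 <;> simp [stmtExt, h]
    rw [Set.mem_setOf_eq, this]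
    exact differentiableOn_const 0
  smul_mem' := by
    intro c f hf
    have : stmtExt (⇑(c • f)) = fun w => c * stmtExt f w := by
      funext w
      by_cases h : w ∈ ball (0:ℂ) 1 <;> simp [stmtExt, h]
    rw [Set.mem_setOf_eq, this]
    exact hf.const_mul c

set_option synthInstance.maxHeartbeats 1000000 in
lemma stmtHinf_isClosed : IsClosed (stmtHinf : Set (↥(ball (0:ℂ) 1) →ᵇ ℂ)) := by
  rw [← isSeqClosed_iff_isClosed]
  intro u f hu hlim
  have hten : TendstoUniformlyOn (fun n => stmtExt (u n)) (stmtExt f) Filter.atTop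
      (ball (0:ℂ) 1) := by
    rw [Metric.tendstoUniformlyOn_iff]
    intro ε hε
    have : Filter.Tendsto (fun n => dist (u n) f) Filter.atTop (nhds 0) :=
      tendsto_iff_dist_tendsto_zero.mp hlim
    filter_upwards [this.eventually (gt_mem_nhds hε)] with n hn x hx
    calc dist (stmtExt f x) (stmtExt (u n) x)
        = dist (f ⟨x, hx⟩) (u n ⟨x, hx⟩) := by rw [stmtExt_eq _ hx, stmtExt_eq _ hx]
      _ ≤ dist f (u n) := dist_coe_le_dist _
      _ = dist (u n) f := dist_comm _ _
      _ < ε := hn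
  exact hten.tendstoLocallyUniformlyOn.differentiableOn
    (Filter.Eventually.of_forall fun n => hu n) isOpen_ball

instance : CompleteSpace ↥stmtHinf := stmtHinf_isClosed.completeSpace_coe

noncomputable def stmtTlin (z : ℕ → ℂ) (hz : ∀ n, z n ∈ ball (0:ℂ) 1) :
    ↥stmtHinf →ₗ[ℂ] (ℕ →ᵇ ℂ) where
  toFun f := ofNormedAddCommGroup (fun n => f.1 ⟨z n, hz n⟩)
    continuous_of_discreteTopology ‖f.1‖ (fun n => f.1.norm_coe_le_norm _)
  map_add' f g := by ext n; simp
  map_smul' c f := by ext n; simp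

lemma stmtTlin_apply (z : ℕ → ℂ) (hz : ∀ n, z n ∈ ball (0:ℂ) 1) (f : ↥stmtHinf) (n : ℕ) :
    stmtTlin z hz f n = f.1 ⟨z n, hz n⟩ := rfl

lemma stmtTlin_bound (z : ℕ → ℂ) (hz : ∀ n, z n ∈ ball (0:ℂ) 1) (f : ↥stmtHinf) :
    ‖stmtTlin z hz f‖ ≤ 1 * ‖f‖ := by
  rw [one_mul]
  calc ‖stmtTlin z hz f‖ ≤ ‖f.1‖ :=
        norm_ofNormedAddCommGroup_le _ (norm_nonneg _) (fun n => f.1.norm_coe_le_norm _)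
    _ = ‖f‖ := rfl

noncomputable def stmtT (z : ℕ → ℂ) (hz : ∀ n, z n ∈ ball (0:ℂ) 1) :
    ↥stmtHinf →L[ℂ] (ℕ →ᵇ ℂ) :=
  (stmtTlin z hz).mkContinuous 1 (stmtTlin_bound z hz)

lemma stmtT_apply (z : ℕ → ℂ) (hz : ∀ n, z n ∈ ball (0:ℂ) 1) (f : ↥stmtHinf) (n : ℕ) :
    stmtT z hz f n = f.1 ⟨z n, hz n⟩ := rfl

end StmtAux

theorem stmt_8 (z : ℕ → ℂ) (hz : ∀ n, ‖z n‖ < 1) (hinj : Function.Injective z)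
    (hinterp : ∀ w : ℕ → ℂ, BddAbove (Set.range fun n => ‖w n‖) →
      ∃ f : ℂ → ℂ, DifferentiableOn ℂ f (Metric.ball 0 1) ∧
        (∃ B : ℝ, ∀ x ∈ Metric.ball (0 : ℂ) 1, ‖f x‖ ≤ B) ∧
        ∀ n, f (z n) = w n) :
    ∃ δ : ℝ, 0 < δ ∧ ∀ n, ∃ f : ℂ → ℂ,
      DifferentiableOn ℂ f (Metric.ball 0 1) ∧
      (∀ x ∈ Metric.ball (0 : ℂ) 1, ‖f x‖ ≤ 1) ∧
      (∀ m, m ≠ n → f (z m) = 0) ∧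
      δ ≤ ‖f (z n)‖ := by
  have zmem : ∀ n, z n ∈ ball (0:ℂ) 1 := fun n => by
    simpa [mem_ball, dist_eq_norm] using hz n
  set T := stmtT z zmem with hT
  have hsurj : Function.Surjective T := by
    intro w
    obtain ⟨f, hdiff, ⟨B, hB⟩, hval⟩ := hinterp (fun n => w n) ⟨‖w‖, by
      rintro x ⟨n, rfl⟩; exact w.norm_coe_le_norm n⟩
    have hcont : Continuous fun x : ↥(ball (0:ℂ) 1) => f x :=
      ContinuousOn.restrict hdiff.continuousOn
    let g : ↥(ball (0:ℂ) 1) →ᵇ ℂ :=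
      ofNormedAddCommGroup (fun x => f x) hcont B (fun x => hB x x.2)
    have hgmem : g ∈ stmtHinf := by
      have : DifferentiableOn ℂ (stmtExt g) (ball (0:ℂ) 1) := by
        apply hdiff.congr
        intro x hx
        rw [stmtExt_eq _ hx]
        rfl
      exact this
    refine ⟨⟨g, hgmem⟩, ?_⟩
    ext n
    show g ⟨z n, zmem n⟩ = w n
    simpa [g] using hval n
  obtain ⟨C, hCpos, hC⟩ := T.exists_preimage_norm_le hsurj
  refine ⟨1 / C, by positivity, fun n => ?_⟩
  -- the indicator sequence e_n
  let e : ℕ →ᵇ ℂ := ofNormedAddCommGroup (fun m => if m = n then 1 else 0)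
    continuous_of_discreteTopology 1 (fun m => by by_cases h : m = n <;> simp [h])
  obtain ⟨x, hTx, hxnorm⟩ := hC e
  have hxC : ‖x‖ ≤ C := by
    calc ‖x‖ ≤ C * ‖e‖ := hxnorm
      _ ≤ C * 1 := by
        have : ‖e‖ ≤ 1 := norm_ofNormedAddCommGroup_le _ zero_le_one _
        exact mul_le_mul_of_nonneg_left this hCpos.le
      _ = C := mul_one C
  have hval : ∀ m, x.1 ⟨z m, zmem m⟩ = if m = n then 1 else 0 := by
    intro m
    have := congrArg (fun w : ℕ →ᵇ ℂ => w m) hTx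
    simpa [hT, stmtT_apply, e] using this
  refine ⟨fun w => (C : ℂ)⁻¹ * stmtExt x.1 w, x.2.const_mul _, ?_, ?_, ?_⟩
  · intro w hw
    rw [norm_mul, stmtExt_eq _ hw]
    calc ‖(C:ℂ)⁻¹‖ * ‖x.1 ⟨w, hw⟩‖ ≤ C⁻¹ * ‖x.1‖ := by
          rw [norm_inv, Complex.norm_real, Real.norm_of_nonneg hCpos.le]
          exact mul_le_mul_of_nonneg_left (x.1.norm_coe_le_norm _) (by positivity)
      _ ≤ C⁻¹ * C := mul_le_mul_of_nonneg_left hxC (by positivity)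
      _ = 1 := inv_mul_cancel₀ hCpos.ne'
  · intro m hm
    show (C : ℂ)⁻¹ * stmtExt (⇑(x : _ →ᵇ ℂ)) (z m) = 0
    rw [stmtExt_eq _ (zmem m), hval m, if_neg hm, mul_zero]
  · show 1 / C ≤ ‖(C : ℂ)⁻¹ * stmtExt (⇑(x : _ →ᵇ ℂ)) (z n)‖
    rw [stmtExt_eq _ (zmem n), hval n, if_pos rfl, mul_one, norm_inv,
      Complex.norm_real, Real.norm_of_nonneg hCpos.le, one_div]
end
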